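/- Suppose Q > 0. Then the explicit tuple given by G_b* = 0, R_b* = 0, B_e* = min{C_dis, E}, R_e* = min{R, E − B_e*}, G_e* = E − B_e* − R_e* is feasible for P3 and attains the minimum: f at this tuple is ≤ f(x) for every x ∈ F. -/
import Mathlib


/-- The feasible set of problem P3. -/
def P3Feasible (R E Cchar Cdis : ℝ) (Re Rb Ge Gb Be : ℝ) : Prop :=
  0 ≤ Gb + Rb ∧ Gb + Rb ≤ Cchar ∧ 0 ≤ Gb ∧ 0 ≤ Rb ∧
  0 ≤ Be ∧ Be ≤ Cdis ∧ 0 ≤ Re + Rb ∧ Re + Rb ≤ R ∧ 0 ≤ Re ∧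
  E = Re + Be + Ge ∧ 0 ≤ Ge ∧ (Gb + Rb) * Be = 0

/-- The objective function of problem P3. -/
noncomputable def P3Obj (P V Q : ℝ) (Re Rb Ge Gb Be : ℝ) : ℝ :=
  (Q + V * P) * Gb + Q * Rb - (Q + V * P) * Be - V * P * Re

/-- Explicit optimal solution of P3 when `Q > 0`. -/
theorem p3_explicit_solution_case3
    (R E P V Q Cchar Cdis : ℝ)
    (hR : 0 ≤ R) (hE : 0 ≤ E) (hP : 0 ≤ P) (hV : 0 < V)
    (hCchar : 0 ≤ Cchar) (hCdis : 0 ≤ Cdis)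
    (hQ : 0 < Q) :
    P3Feasible R E Cchar Cdis
      (min R (E - min Cdis E))
      0
      (E - min Cdis E - min R (E - min Cdis E))
      0
      (min Cdis E) ∧
    ∀ Re' Rb' Ge' Gb' Be' : ℝ,
      P3Feasible R E Cchar Cdis Re' Rb' Ge' Gb' Be' →
      P3Obj P V Q (min R (E - min Cdis E)) 0
        (E - min Cdis E - min R (E - min Cdis E)) 0 (min Cdis E) ≤
      P3Obj P V Q Re' Rb' Ge' Gb' Be' := by
  have hBE : min Cdis E ≤ E := min_le_right _ _
  have hEB : 0 ≤ E - min Cdis E := by linarith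
  have hR2 : min R (E - min Cdis E) ≤ E - min Cdis E := min_le_right _ _
  constructor
  · refine ⟨by norm_num, by norm_num [hCchar], le_refl 0, le_refl 0,
      le_min hCdis hE, min_le_left _ _, by simp [le_min hR hEB],
      by simp [min_le_left R (E - min Cdis E)], le_min hR hEB,
      by ring, by linarith, by ring⟩
  · intro Re' Rb' Ge' Gb' Be' h
    obtain ⟨h1, h2, h3, h4, h5, h6, h7, h8, h9, h10, h11, h12⟩ := h
    have hBe : Be' ≤ min Cdis E := le_min h6 (by linarith)
    have hVP : 0 ≤ V * P := by positivity
    unfold P3Obj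
    rcases min_cases R (E - min Cdis E) with ⟨heq, _⟩ | ⟨heq, _⟩ <;>
      nlinarith [mul_nonneg hVP (sub_nonneg.mpr hBe),
        mul_nonneg hQ.le (sub_nonneg.mpr hBe), mul_nonneg hQ.le h4,
        mul_nonneg hQ.le h3, mul_nonneg hVP h3]
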